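/- Let G' = (V, E') be the random subgraph of G = (V, E) obtained by including each edge independently with probability p = 4/log n, and for each e ∈ E let s'_e denote the strong connectivity of e in the graph (V, E' ∪ {e}). Then, with high probability (at least 1 − n^{−d}), every edge e ∈ E satisfies s'_e ≤ s_e ≤ 2 s'_e log n + ρ log n, where ρ = 16(d+2) ln n. -/

import Mathlib

namespace GraphSparsification

open scoped BigOperators

variable {V : Type*}

/-- An edge `e` crosses the cut `(S, Sᶜ)`. -/
def Crosses (S : Set V) (e : Sym2 V) : Prop :=
  ∃ u v, e = s(u, v) ∧ u ∈ S ∧ v ∉ S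

/-- The value (number of edges) of the cut determined by `S` in the edge set `E`. -/
noncomputable def cutValue (E : Set (Sym2 V)) (S : Set V) : ℕ :=
  {e | e ∈ E ∧ Crosses S e}.ncard

/-- The graph with vertex set `U` and edge set `F` is `k`-connected:
every cut has value at least `k`. -/
def IsKConnected (U : Set V) (F : Set (Sym2 V)) (k : ℕ) : Prop :=
  ∀ S : Set V, S ⊆ U → S.Nonempty → S ≠ U → k ≤ cutValue F S

/-- Edges of `E` with both endpoints in `U` (the vertex-induced subgraph). -/
def induced (E : Set (Sym2 V)) (U : Set V) : Set (Sym2 V) :=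
  {e | e ∈ E ∧ ∀ x ∈ e, x ∈ U}

/-- `U` is a `k`-strong component of the graph with edge set `E`:
a maximal `k`-connected vertex-induced subgraph. -/
def IsStrongComponent (E : Set (Sym2 V)) (k : ℕ) (U : Set V) : Prop :=
  U.Nonempty ∧ IsKConnected U (induced E U) k ∧
    ∀ U' : Set V, U ⊆ U' → IsKConnected U' (induced E U') k → U' = U

/-- Strong connectivity of an edge: the largest `k` such that some `k`-strong component
contains `e`. -/
noncomputable def strongConn (E : Set (Sym2 V)) (e : Sym2 V) : ℕ :=
  sSup {k | ∃ U : Set V, IsStrongComponent E k U ∧ e ∈ induced E U}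

/-- Connectivity via edges of `F`. -/
def connRel (F : Set (Sym2 V)) : V → V → Prop :=
  Relation.ReflTransGen (fun a b => a ≠ b ∧ s(a, b) ∈ F)

/-- Number of connected components of the graph on `V` with edge set `F`. -/
noncomputable def numComponents (F : Set (Sym2 V)) : ℕ :=
  Nat.card (Quot (fun a b : V => a ≠ b ∧ s(a, b) ∈ F))

/-- Weight of the cut determined by `S` in the weighted graph `(E', w)`. -/
noncomputable def cutWeight (E' : Set (Sym2 V)) (w : Sym2 V → ℝ) (S : Set V) : ℝ :=
  ∑ᶠ e ∈ {e | e ∈ E' ∧ Crosses S e}, w e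

/-- The weighted graph `(E', w)` is an `ε`-sparsification of `E`: every weighted cut is
within a `(1 ± ε)` factor of the corresponding cut of `E`. -/
def IsSparsification (E E' : Set (Sym2 V)) (w : Sym2 V → ℝ) (ε : ℝ) : Prop :=
  ∀ S : Set V, S.Nonempty → S ≠ Set.univ →
    (1 - ε) * (cutValue E S : ℝ) ≤ cutWeight E' w S ∧
      cutWeight E' w S ≤ (1 + ε) * (cutValue E S : ℝ)

/-- Probability weight of the outcome `σ` when each coin `a` comes up `true`
independently with probability `p a`. -/
noncomputable def bernWeight {α : Type*} [Fintype α] (p : α → ℝ) (σ : α → Bool) : ℝ :=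
  ∏ a, if σ a then p a else 1 - p a

/-- Probability of the event `A` under independent coins with head-probabilities `p`. -/
noncomputable def Pr {α : Type*} [Fintype α] [DecidableEq α] (p : α → ℝ)
    (A : Set (α → Bool)) : ℝ :=
  ∑ σ : α → Bool, A.indicator (bernWeight p) σ

/-- Expectation of `f` under independent coins with head-probabilities `p`. -/
noncomputable def Exp {α : Type*} [Fintype α] [DecidableEq α] (p : α → ℝ)
    (f : (α → Bool) → ℝ) : ℝ :=
  ∑ σ : α → Bool, bernWeight p σ * f σ

/-- Same-part relation of the partition `S_{l,k}` of refinement sampling after `k` rounds of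
refinement at level `l` (the `Fin L` index `l` represents level `l+1`, and the `Fin K`
index `k` represents round `k+1`): `S_{l,0} = {V}`, and `S_{l,k+1}` splits each part of
`S_{l,k}` into the connected components spanned by edges whose `(l,k+1)`-coin is `true`
and whose endpoints lie in one part of `S_{l,k}`. -/
def sameS (E : Set (Sym2 V)) {L K : ℕ} (σ : Fin L × Fin K × Sym2 V → Bool) (l : Fin L) :
    ℕ → V → V → Prop
  | 0 => fun _ _ => True
  | k + 1 => fun u v =>
      Relation.ReflTransGen (fun a b => a ≠ b ∧ s(a, b) ∈ E ∧ sameS E σ l k a b ∧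
        ∃ hk : k < K, σ (l, ⟨k, hk⟩, s(a, b)) = true) u v

/-- `L(e)`: the minimum level `l ∈ {1, …, L}` such that the endpoints of `e` lie in
different parts of `S_{l,K}`. -/
noncomputable def levelOf (E : Set (Sym2 V)) {L K : ℕ} (σ : Fin L × Fin K × Sym2 V → Bool)
    (e : Sym2 V) : ℕ :=
  sInf {m | ∃ l : Fin L, m = (l : ℕ) + 1 ∧ ∀ u v : V, e = s(u, v) → ¬ sameS E σ l K u v}

/-- Head-probabilities of the refinement-sampling coins: the coin of level `l` (represented
by the `Fin L` index `l - 1`) comes up `true` with probability `2^{-l}`. -/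
noncomputable def pCoins {L K : ℕ} : Fin L × Fin K × Sym2 V → ℝ :=
  fun x => (1 / 2 : ℝ) ^ ((x.1 : ℕ) + 1)

/-- One step of Algorithm 3: process the arriving edge `e` with coins `coin` (indexed by
`J ∈ {1, …, LK}`), updating the partitions `D`, where `D 0` is the trivial partition `{V}`:
for `J = 1, 2, …` in order, the parts of `D J` containing the endpoints of `e` are merged
if the `J`-th coin of `e` is `true` and the endpoints of `e` lie in one part of the
(already updated) partition number `J - 1`. -/
def processEdge (e : Sym2 V) (coin : ℕ → Bool) (D : ℕ → V → V → Prop) : ℕ → V → V → Prop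
  | 0 => fun _ _ => True
  | J + 1 => fun u v =>
      Relation.EqvGen (fun a b => D (J + 1) a b ∨
        (coin (J + 1) = true ∧ s(a, b) = e ∧ processEdge e coin D J a b)) u v

/-- Initial state of the partitions of Algorithm 3: `D 0 = {V}` is the trivial partition and
all other partitions consist of singletons. -/
def initD : ℕ → V → V → Prop
  | 0 => fun _ _ => True
  | _ + 1 => Eq

/-- State of the partitions of Algorithm 3 after the first `t` edges of the stream `es`
have been processed. -/
def DStream (coin : Sym2 V → ℕ → Bool) (es : ℕ → Sym2 V) : ℕ → ℕ → V → V → Prop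
  | 0 => initD
  | t + 1 => processEdge (es t) (coin (es t)) (DStream coin es t)

/-- The endpoints of the edge `es t` lie in the same part of partition number `J` at the
moment `es t` arrives (i.e. while `es t` is being processed, partitions `0, …, J` having
already been updated). -/
def connectedAtArrival (coin : Sym2 V → ℕ → Bool) (es : ℕ → Sym2 V) (t J : ℕ) : Prop :=
  ∀ u v : V, es t = s(u, v) → processEdge (es t) (coin (es t)) (DStream coin es t) J u v

/-- The coins of Algorithm 3, reindexed by `J = K(l-1) + k`. -/
def coinOf {L K : ℕ} (σ : Fin L × Fin K × Sym2 V → Bool) : Sym2 V → ℕ → Bool :=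
  fun e J =>
    if h : 1 ≤ J ∧ (J - 1) / K < L ∧ (J - 1) % K < K then
      σ (⟨(J - 1) / K, h.2.1⟩, ⟨(J - 1) % K, h.2.2⟩, e)
    else false

/-- `L'(e_t)`: the minimum level `l ∈ {1, …, L}` such that the endpoints of the edge `es t`
lie in different parts of `D_{(l,K)}` (i.e. partition number `lK`) when `es t` is
processed. -/
noncomputable def streamLevel (coin : Sym2 V → ℕ → Bool) (es : ℕ → Sym2 V) (K L t : ℕ) : ℕ :=
  sInf {l | 1 ≤ l ∧ l ≤ L ∧ ∀ u v : V, es t = s(u, v) → ¬ DStream coin es (t + 1) (l * K) u v}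

set_option linter.unusedSectionVars false
set_option linter.unnecessarySeqFocus false

section Prob
variable {α : Type*} [Fintype α] [DecidableEq α]

lemma sum_prod_bool (h : α → Bool → ℝ) :
    ∑ σ : α → Bool, ∏ a, h a (σ a) = ∏ a, (h a true + h a false) := by
  have : ∀ a : α, h a true + h a false = ∑ b : Bool, h a b := by
    intro a; simp [Fintype.sum_bool]
  simp_rw [this]
  rw [Finset.prod_univ_sum, Fintype.piFinset_univ]

lemma sum_bernWeight (p : α → ℝ) : ∑ σ : α → Bool, bernWeight p σ = 1 := by
  have := sum_prod_bool (fun a b => if b then p a else 1 - p a)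
  simp only [if_true, if_false] at this
  simpa [bernWeight] using this

lemma bernWeight_nonneg {p : α → ℝ} (h0 : ∀ a, 0 ≤ p a) (h1 : ∀ a, p a ≤ 1)
    (σ : α → Bool) : 0 ≤ bernWeight p σ := by
  apply Finset.prod_nonneg
  intro a _
  by_cases h : σ a <;> simp [h] <;> [exact h0 a; linarith [h1 a]]

lemma Pr_univ (p : α → ℝ) : Pr p Set.univ = 1 := by
  simp [Pr, Set.indicator_univ, sum_bernWeight]

lemma Pr_add_compl (p : α → ℝ) (A : Set (α → Bool)) : Pr p A + Pr p Aᶜ = 1 := by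
  rw [Pr, Pr, ← Finset.sum_add_distrib]
  rw [← sum_bernWeight p]
  apply Finset.sum_congr rfl
  intro σ _
  by_cases h : σ ∈ A <;> simp [Set.indicator_apply, h]

lemma Pr_nonneg {p : α → ℝ} (h0 : ∀ a, 0 ≤ p a) (h1 : ∀ a, p a ≤ 1)
    (A : Set (α → Bool)) : 0 ≤ Pr p A := by
  apply Finset.sum_nonneg
  intro σ _
  exact Set.indicator_nonneg (fun x _ => bernWeight_nonneg h0 h1 x) σ

lemma Pr_union_bound {p : α → ℝ} (h0 : ∀ a, 0 ≤ p a) (h1 : ∀ a, p a ≤ 1)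
    {ι : Type*} (I : Finset ι) (B : ι → Set (α → Bool)) :
    Pr p (⋃ i ∈ I, B i) ≤ ∑ i ∈ I, Pr p (B i) := by
  rw [Pr]
  have hpt : ∀ σ : α → Bool, (⋃ i ∈ I, B i).indicator (bernWeight p) σ ≤
      ∑ i ∈ I, (B i).indicator (bernWeight p) σ := by
    intro σ
    by_cases h : σ ∈ ⋃ i ∈ I, B i
    · rw [Set.indicator_of_mem h]
      obtain ⟨i, hiI, hiB⟩ := Set.mem_iUnion₂.mp h
      have : bernWeight p σ = (B i).indicator (bernWeight p) σ := by
        rw [Set.indicator_of_mem hiB]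
      rw [this]
      exact Finset.single_le_sum
        (fun j _ => Set.indicator_nonneg (fun x _ => bernWeight_nonneg h0 h1 x) σ) hiI
    · rw [Set.indicator_of_notMem h]
      exact Finset.sum_nonneg fun j _ =>
        Set.indicator_nonneg (fun x _ => bernWeight_nonneg h0 h1 x) σ
  calc ∑ σ : α → Bool, (⋃ i ∈ I, B i).indicator (bernWeight p) σ
      ≤ ∑ σ : α → Bool, ∑ i ∈ I, (B i).indicator (bernWeight p) σ :=
        Finset.sum_le_sum fun σ _ => hpt σ
    _ = ∑ i ∈ I, Pr p (B i) := by rw [Finset.sum_comm]; rfl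

lemma Pr_mono {p : α → ℝ} (h0 : ∀ a, 0 ≤ p a) (h1 : ∀ a, p a ≤ 1)
    {A B : Set (α → Bool)} (hAB : A ⊆ B) : Pr p A ≤ Pr p B := by
  apply Finset.sum_le_sum
  intro σ _
  by_cases h : σ ∈ A
  · rw [Set.indicator_of_mem h, Set.indicator_of_mem (hAB h)]
  · rw [Set.indicator_of_notMem h]
    exact Set.indicator_nonneg (fun x _ => bernWeight_nonneg h0 h1 x) σ

lemma chernoff (p : ℝ) (hp0 : 0 ≤ p) (hp1 : p ≤ 1) (C : Finset α) (t : ℝ)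
    (ht : t ≤ p * C.card / 8) :
    Pr (fun _ : α => p) {σ | ((C.filter fun a => σ a = true).card : ℝ) < t} ≤
      Real.exp (-(3 / 8) * (p * C.card)) := by
  set w := bernWeight (fun _ : α => p) with hw
  set X : (α → Bool) → ℝ := fun σ => ((C.filter fun a => σ a = true).card : ℝ) with hX
  have hln2 : (0:ℝ) < Real.log 2 := Real.log_pos (by norm_num)
  -- pointwise bound
  have hpt : ∀ σ : α → Bool,
      ({σ | X σ < t} : Set (α → Bool)).indicator w σ ≤
        Real.exp (Real.log 2 * t) * (w σ * Real.exp (-Real.log 2 * X σ)) := by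
    intro σ
    have hw0 : 0 ≤ w σ := bernWeight_nonneg (fun _ => hp0) (fun _ => hp1) σ
    by_cases h : σ ∈ ({σ | X σ < t} : Set (α → Bool))
    · rw [Set.indicator_of_mem h]
      have hXt : X σ < t := h
      have h1 : (1:ℝ) ≤ Real.exp (Real.log 2 * t) * Real.exp (-Real.log 2 * X σ) := by
        rw [← Real.exp_add]
        rw [show Real.log 2 * t + -Real.log 2 * X σ = Real.log 2 * (t - X σ) by ring]
        have : 0 ≤ Real.log 2 * (t - X σ) := by
          apply mul_nonneg hln2.le; linarith
        calc (1:ℝ) = Real.exp 0 := Real.exp_zero.symm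
          _ ≤ _ := Real.exp_le_exp.mpr this
      nlinarith [Real.exp_pos (Real.log 2 * t), Real.exp_pos (-Real.log 2 * X σ)]
    · rw [Set.indicator_of_notMem h]
      positivity
  -- the mgf computation
  have hmgf : ∑ σ : α → Bool, w σ * Real.exp (-Real.log 2 * X σ) =
      (1 - p / 2) ^ C.card := by
    have key : ∀ σ : α → Bool, w σ * Real.exp (-Real.log 2 * X σ) =
        ∏ a, ((if σ a then p else 1 - p) * (if a ∈ C ∧ σ a = true then (1:ℝ)/2 else 1)) := by
      intro σ
      rw [Finset.prod_mul_distrib]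
      congr 1
      have h1 : ∏ a, (if a ∈ C ∧ σ a = true then (1:ℝ)/2 else 1) =
          ((1:ℝ)/2) ^ (Finset.univ.filter fun a => a ∈ C ∧ σ a = true).card := by
        rw [Finset.prod_ite _ _]
        simp [Finset.prod_const]
      have h2 : (Finset.univ.filter fun a => a ∈ C ∧ σ a = true) =
          C.filter fun a => σ a = true := by
        ext a; simp
      rw [h1, h2, hX]
      simp only
      rw [mul_comm (-Real.log 2), Real.exp_nat_mul, Real.exp_neg,
        Real.exp_log (by norm_num : (0:ℝ) < 2)]
      norm_num
    simp_rw [key]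
    rw [sum_prod_bool (fun a b => (if b then p else 1 - p) *
      (if a ∈ C ∧ b = true then (1:ℝ)/2 else 1))]
    trans ∏ a : α, (if a ∈ C then 1 - p/2 else 1)
    · apply Finset.prod_congr rfl
      intro a _
      by_cases h : a ∈ C <;> simp [h] <;> ring
    · rw [Finset.prod_ite_mem, Finset.univ_inter, Finset.prod_const]
  -- final assembly
  calc Pr (fun _ : α => p) {σ | X σ < t}
      ≤ ∑ σ : α → Bool, Real.exp (Real.log 2 * t) * (w σ * Real.exp (-Real.log 2 * X σ)) :=
        Finset.sum_le_sum fun σ _ => hpt σ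
    _ = Real.exp (Real.log 2 * t) * ((1 - p / 2) ^ C.card) := by
        rw [← Finset.mul_sum, hmgf]
    _ ≤ Real.exp (Real.log 2 * t) * Real.exp (-(p/2)) ^ C.card := by
        apply mul_le_mul_of_nonneg_left _ (Real.exp_pos _).le
        apply pow_le_pow_left₀ (by linarith)
        linarith [Real.add_one_le_exp (-(p/2))]
    _ = Real.exp (Real.log 2 * t + (-(p/2)) * C.card) := by
        rw [← Real.exp_nat_mul, ← Real.exp_add]; ring_nf
    _ ≤ Real.exp (-(3 / 8) * (p * C.card)) := by
        apply Real.exp_le_exp.mpr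
        have hlog2 : Real.log 2 ≤ 1 := by
          have := Real.log_le_sub_one_of_pos (by norm_num : (0:ℝ) < 2)
          linarith
        have hc : (0:ℝ) ≤ (C.card : ℝ) := Nat.cast_nonneg _
        have h1 : Real.log 2 * t ≤ Real.log 2 * (p * C.card / 8) :=
          mul_le_mul_of_nonneg_left ht hln2.le
        have h2 : Real.log 2 * (p * C.card / 8) ≤ p * C.card / 8 := by
          have : 0 ≤ p * C.card / 8 := by positivity
          nlinarith
        nlinarith

end Prob


section Strong
variable {V : Type*} [Fintype V] [DecidableEq V]

lemma crosses_symm_mem {S : Set V} {x y : V} (hx : x ∈ S) (hy : y ∉ S) :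
    Crosses S s(x, y) := ⟨x, y, rfl, hx, hy⟩

lemma cutValue_mono {F F' : Set (Sym2 V)} (h : F ⊆ F') (S : Set V) :
    cutValue F S ≤ cutValue F' S := by
  apply Set.ncard_le_ncard _ (Set.toFinite _)
  intro a ⟨ha1, ha2⟩
  exact ⟨h ha1, ha2⟩

lemma induced_mono {F F' : Set (Sym2 V)} (h : F ⊆ F') (U : Set V) :
    induced F U ⊆ induced F' U := fun a ⟨ha1, ha2⟩ => ⟨h ha1, ha2⟩

lemma isKConnected_mono {U : Set V} {F F' : Set (Sym2 V)} (h : F ⊆ F') {k : ℕ}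
    (hk : IsKConnected U F k) : IsKConnected U F' k :=
  fun S hS h1 h2 => le_trans (hk S hS h1 h2) (cutValue_mono h S)

/-- Any element of the strong-connectivity defining set is at most `n - 1`. -/
lemma strongSet_le {E : Set (Sym2 V)} (hE : ∀ a ∈ E, ¬ a.IsDiag) {e : Sym2 V}
    {k : ℕ} (hk : k ∈ {k | ∃ U : Set V, IsStrongComponent E k U ∧ e ∈ induced E U}) :
    k ≤ Fintype.card V - 1 := by
  obtain ⟨U, ⟨hUne, hconn, _⟩, heE, hend⟩ := hk
  induction e using Sym2.ind with
  | _ u v =>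
  have huv : u ≠ v := by
    intro h; exact hE _ heE (by rw [Sym2.mk_isDiag_iff]; exact h)
  have hu : u ∈ U := hend u (Sym2.mem_mk_left u v)
  have hv : v ∈ U := hend v (Sym2.mem_mk_right u v)
  have h1 : k ≤ cutValue (induced E U) {u} := by
    apply hconn {u} (by simpa using hu) ⟨u, rfl⟩
    intro h
    rw [← h] at hv
    exact huv (hv.symm)
  refine le_trans h1 ?_
  have hsub : {a | a ∈ induced E U ∧ Crosses {u} a} ⊆ (fun y => s(u, y)) '' {u}ᶜ := by
    rintro a ⟨-, x, y, rfl, hx, hy⟩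
    have hxu : x = u := hx
    exact ⟨y, hy, by rw [hxu]⟩
  calc cutValue (induced E U) {u} ≤ (((fun y => s(u, y)) '' {u}ᶜ)).ncard :=
        Set.ncard_le_ncard hsub (Set.toFinite _)
    _ ≤ ({u}ᶜ : Set V).ncard := Set.ncard_image_le (Set.toFinite _)
    _ = Fintype.card V - 1 := by
        have huc : ({u}ᶜ : Set V) = Set.univ \ {u} := by ext x; simp
        rw [huc, Set.ncard_diff_singleton_of_mem (Set.mem_univ u), Set.ncard_univ,
          Nat.card_eq_fintype_card]

lemma strongSet_bddAbove {E : Set (Sym2 V)} (hE : ∀ a ∈ E, ¬ a.IsDiag) (e : Sym2 V) :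
    BddAbove {k | ∃ U : Set V, IsStrongComponent E k U ∧ e ∈ induced E U} :=
  ⟨Fintype.card V - 1, fun _ hk => strongSet_le hE hk⟩

lemma strongSet_zero_mem {E : Set (Sym2 V)} {e : Sym2 V} (he : e ∈ E) :
    0 ∈ {k | ∃ U : Set V, IsStrongComponent E k U ∧ e ∈ induced E U} := by
  have hne : (Set.univ : Set V).Nonempty := by
    induction e using Sym2.ind with
    | _ u v => exact ⟨u, Set.mem_univ u⟩
  refine ⟨Set.univ, ⟨hne, fun S _ _ _ => Nat.zero_le _, fun U' hU' _ =>
    le_antisymm (Set.subset_univ _) hU'⟩, he, fun x _ => Set.mem_univ x⟩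

/-- If `e`'s endpoints lie in a `k`-connected induced subgraph, then `k ≤ strongConn E e`. -/
lemma le_strongConn {E : Set (Sym2 V)} (hE : ∀ a ∈ E, ¬ a.IsDiag) {e : Sym2 V}
    (he : e ∈ E) {U : Set V} (hU : ∀ x ∈ e, x ∈ U)
    {k : ℕ} (hk : IsKConnected U (induced E U) k) : k ≤ strongConn E e := by
  -- extend U to a maximal k-connected superset
  set 𝒰 : Set (Set V) := {U' | U ⊆ U' ∧ IsKConnected U' (induced E U') k} with h𝒰
  have hUne : U.Nonempty := by
    induction e using Sym2.ind with
    | _ u v => exact ⟨u, hU u (Sym2.mem_mk_left u v)⟩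
  have h1 : 𝒰.Nonempty := ⟨U, subset_refl U, hk⟩
  obtain ⟨U', hU'mem, hU'max⟩ :=
    Set.Finite.exists_maximalFor Set.ncard 𝒰 (Set.toFinite 𝒰) h1
  obtain ⟨hUU', hU'conn⟩ := hU'mem
  have hcomp : IsStrongComponent E k U' := by
    refine ⟨hUne.mono hUU', hU'conn, ?_⟩
    intro U'' hsub hconn''
    have hU''mem : U'' ∈ 𝒰 := ⟨hUU'.trans hsub, hconn''⟩
    have := hU'max hU''mem (Set.ncard_le_ncard hsub (Set.toFinite _))
    exact (Set.eq_of_subset_of_ncard_le hsub this (Set.toFinite _)).symm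
  apply le_csSup (strongSet_bddAbove hE e)
  exact ⟨U', hcomp, he, fun x hx => hUU' (hU x hx)⟩

lemma strongConn_le_card {E : Set (Sym2 V)} (hE : ∀ a ∈ E, ¬ a.IsDiag) {e : Sym2 V}
    (he : e ∈ E) : strongConn E e ≤ Fintype.card V - 1 := by
  apply csSup_le ⟨0, strongSet_zero_mem he⟩
  exact fun k hk => strongSet_le hE hk

/-- There is a `strongConn E e`-connected induced subgraph containing `e`'s endpoints. -/
lemma exists_strong_witness {E : Set (Sym2 V)} (hE : ∀ a ∈ E, ¬ a.IsDiag) {e : Sym2 V}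
    (he : e ∈ E) : ∃ U : Set V,
      IsKConnected U (induced E U) (strongConn E e) ∧ ∀ x ∈ e, x ∈ U := by
  have hmem : strongConn E e ∈
      {k | ∃ U : Set V, IsStrongComponent E k U ∧ e ∈ induced E U} :=
    Nat.sSup_mem ⟨0, strongSet_zero_mem he⟩ (strongSet_bddAbove hE e)
  obtain ⟨U, ⟨_, hconn, _⟩, _, hend⟩ := hmem
  exact ⟨U, hconn, hend⟩

/-- Monotonicity of strong connectivity for subgraphs. -/
lemma strongConn_subgraph_le {E F : Set (Sym2 V)} (hE : ∀ a ∈ E, ¬ a.IsDiag)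
    (hFE : F ⊆ E) {e : Sym2 V} (he : e ∈ E) :
    strongConn F e ≤ strongConn E e := by
  by_cases hne : {k | ∃ U : Set V, IsStrongComponent F k U ∧ e ∈ induced F U}.Nonempty
  · have hF : ∀ a ∈ F, ¬ a.IsDiag := fun a ha => hE a (hFE ha)
    have hmem := Nat.sSup_mem hne (strongSet_bddAbove hF e)
    obtain ⟨U, ⟨_, hconn, _⟩, _, hend⟩ := hmem
    exact le_strongConn hE he hend (isKConnected_mono (induced_mono hFE U) hconn)
  · rw [Set.not_nonempty_iff_eq_empty] at hne
    rw [strongConn, hne]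
    simp

/-- Every edge of a loopless graph has strong connectivity at least 1. -/
lemma one_le_strongConn {F : Set (Sym2 V)} (hF : ∀ a ∈ F, ¬ a.IsDiag) {e : Sym2 V}
    (he : e ∈ F) : 1 ≤ strongConn F e := by
  induction e using Sym2.ind with
  | _ u v =>
  set r : V → V → Prop := fun a b => a ≠ b ∧ s(a, b) ∈ F with hr
  have hrsymm : ∀ a b, r a b → r b a := by
    rintro a b ⟨h1, h2⟩
    exact ⟨h1.symm, by rwa [Sym2.eq_swap]⟩
  set U : Set V := {x | Relation.ReflTransGen r u x} with hUdef
  have huU : u ∈ U := Relation.ReflTransGen.refl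
  have hclosed : ∀ x y, x ∈ U → r x y → y ∈ U := by
    intro x y hx hxy
    exact Relation.ReflTransGen.tail hx hxy
  have huv : u ≠ v := by
    intro h; exact hF _ he (by rw [Sym2.mk_isDiag_iff]; exact h)
  have hvU : v ∈ U := hclosed u v huU ⟨huv, he⟩
  have hend : ∀ x ∈ s(u, v), x ∈ U := by
    intro x hx
    rcases Sym2.mem_iff.mp hx with h | h <;> rw [h]
    · exact huU
    · exact hvU
  apply le_strongConn hF he hend
  intro S hSU hSne hSneU
  obtain ⟨a, haS⟩ := hSne
  obtain ⟨b, hbU, hbS⟩ := Set.exists_of_ssubset ⟨hSU, fun h => hSneU (le_antisymm hSU h)⟩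
  -- path from a to b
  have hpath : Relation.ReflTransGen r a b := by
    have h1 : Relation.ReflTransGen r u a := hSU haS
    have h2 : Relation.ReflTransGen r u b := hbU
    exact (haveI : Std.Symm r := ⟨hrsymm⟩; Std.Symm.symm _ _ h1).trans h2
  -- extract a crossing edge
  have hcross : ∀ c, Relation.ReflTransGen r a c → c ∉ S →
      ∃ x y, r x y ∧ x ∈ S ∧ y ∉ S ∧ x ∈ U := by
    intro c hc
    induction hc with
    | refl => exact fun h => absurd haS h
    | @tail m c' ham hmc ih =>
      intro hc'
      by_cases hmS : m ∈ S
      · exact ⟨m, c', hmc, hmS, hc', hSU hmS⟩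
      · exact ih hmS
  obtain ⟨x, y, hxy, hxS, hyS, hxU⟩ := hcross b hpath hbS
  have hyU : y ∈ U := hclosed x y hxU hxy
  have hmem : s(x, y) ∈ {a | a ∈ induced F U ∧ Crosses S a} := by
    refine ⟨⟨hxy.2, ?_⟩, crosses_symm_mem hxS hyS⟩
    intro z hz
    rcases Sym2.mem_iff.mp hz with h | h <;> rw [h]
    · exact hxU
    · exact hyU
  exact (Set.ncard_pos (Set.toFinite _)).mpr ⟨_, hmem⟩

end Strong


section Count
variable {V : Type*} [Fintype V] [DecidableEq V]

attribute [local instance] Classical.propDecidable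

/-- The crossing edges of the cut `S` among the edge set `W`, as a `Finset`. -/
noncomputable def xE (W : Finset (Sym2 V)) (S : Finset V) : Finset (Sym2 V) :=
  W.filter fun a => Crosses (↑S : Set V) a

/-- `P` is a partition of `U` into nonempty blocks. -/
def IsPartitionOf (U : Finset V) (P : Finset (Finset V)) : Prop :=
  (∀ B ∈ P, B.Nonempty) ∧ (∀ B ∈ P, ∀ B' ∈ P, B ≠ B' → Disjoint B B') ∧
    P.biUnion id = U

/-- Subsets of the partition `P` whose union gives a nontrivial cut of value at most `β * s`. -/
noncomputable def viol (W : Finset (Sym2 V)) (s β : ℕ) (P : Finset (Finset V)) :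
    Finset (Finset (Finset V)) :=
  P.powerset.filter fun Q => Q.Nonempty ∧ Q ≠ P ∧ (xE W (Q.biUnion id)).card ≤ β * s

/-- Edges of `W` whose endpoints lie in different blocks of `P`. -/
noncomputable def interE (W : Finset (Sym2 V)) (P : Finset (Finset V)) :
    Finset (Sym2 V) :=
  W.filter fun a => ∃ B ∈ P, Crosses (↑B : Set V) a

/-- The blocks of `P` meeting the edge `a`. -/
noncomputable def Tof (P : Finset (Finset V)) (a : Sym2 V) : Finset (Finset V) :=
  P.filter fun B => ∃ x ∈ a, x ∈ B

/-- The partition obtained from `P` by merging the blocks meeting `a`. -/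
noncomputable def Pmerge (P : Finset (Finset V)) (a : Sym2 V) : Finset (Finset V) :=
  insert ((Tof P a).biUnion id) (P \ Tof P a)

namespace PartAux
variable {U : Finset V} {P : Finset (Finset V)}

lemma block_subset (hP : IsPartitionOf U P) {B : Finset V} (hB : B ∈ P) : B ⊆ U := by
  rw [← hP.2.2]
  intro x hx
  exact Finset.mem_biUnion.mpr ⟨B, hB, hx⟩

lemma block_eq (hP : IsPartitionOf U P) {B B' : Finset V} (hB : B ∈ P) (hB' : B' ∈ P)
    {x : V} (hx : x ∈ B) (hx' : x ∈ B') : B = B' := by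
  by_contra h
  exact Finset.disjoint_left.mp (hP.2.1 B hB B' hB' h) hx hx'

lemma exists_block (hP : IsPartitionOf U P) {x : V} (hx : x ∈ U) : ∃ B ∈ P, x ∈ B := by
  rw [← hP.2.2] at hx
  simpa using Finset.mem_biUnion.mp hx

lemma block_ne_univ (hP : IsPartitionOf U P) (hcard : 2 ≤ P.card) {B : Finset V}
    (hB : B ∈ P) : B ≠ U := by
  obtain ⟨B', hB', hne⟩ := Finset.exists_mem_ne hcard B
  obtain ⟨z, hz⟩ := hP.1 B' hB'
  intro h
  have hzU : z ∈ U := block_subset hP hB' hz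
  rw [← h] at hzU
  exact Finset.disjoint_left.mp (hP.2.1 B' hB' B hB hne) hz hzU

lemma mem_union_blocks_iff (hP : IsPartitionOf U P) {Q : Finset (Finset V)} (hQ : Q ⊆ P)
    {B : Finset V} (hB : B ∈ P) : B ⊆ Q.biUnion id ↔ B ∈ Q := by
  constructor
  · intro h
    obtain ⟨z, hz⟩ := hP.1 B hB
    obtain ⟨C, hC, hzC⟩ := Finset.mem_biUnion.mp (h hz)
    rwa [block_eq hP hB (hQ hC) hz hzC]
  · intro h z hz
    exact Finset.mem_biUnion.mpr ⟨B, h, hz⟩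

lemma eq_filter_subset (hP : IsPartitionOf U P) {Q : Finset (Finset V)} (hQ : Q ⊆ P) :
    Q = P.filter fun B => B ⊆ Q.biUnion id := by
  ext B
  simp only [Finset.mem_filter]
  constructor
  · intro h
    exact ⟨hQ h, (mem_union_blocks_iff hP hQ (hQ h)).mpr h⟩
  · rintro ⟨h1, h2⟩
    exact (mem_union_blocks_iff hP hQ h1).mp h2

lemma union_ne_univ (hP : IsPartitionOf U P) {Q : Finset (Finset V)} (hQ : Q ⊆ P)
    (hne : Q ≠ P) : Q.biUnion id ≠ U := by
  obtain ⟨B₀, hB₀P, hB₀Q⟩ := Finset.exists_of_ssubset (Finset.ssubset_iff_subset_ne.mpr ⟨hQ, hne⟩)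
  obtain ⟨z, hz⟩ := hP.1 B₀ hB₀P
  intro h
  have hzU : z ∈ U := block_subset hP hB₀P hz
  rw [← h] at hzU
  obtain ⟨C, hC, hzC⟩ := Finset.mem_biUnion.mp hzU
  rw [block_eq hP hB₀P (hQ hC) hz hzC] at hB₀Q
  exact hB₀Q hC

lemma union_nonempty (hP : IsPartitionOf U P) {Q : Finset (Finset V)} (hQ : Q ⊆ P)
    (hne : Q.Nonempty) : (Q.biUnion id).Nonempty := by
  obtain ⟨B, hB⟩ := hne
  obtain ⟨z, hz⟩ := hP.1 B (hQ hB)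
  exact ⟨z, Finset.mem_biUnion.mpr ⟨B, hB, hz⟩⟩

lemma crosses_cases {S : Set V} {x y : V} (h : Crosses S s(x, y)) :
    (x ∈ S ∧ y ∉ S) ∨ (y ∈ S ∧ x ∉ S) := by
  obtain ⟨u, v, huv, hu, hv⟩ := h
  rcases Sym2.eq_iff.mp huv.symm with ⟨hx, hy⟩ | ⟨hx, hy⟩
  · left; rw [← hx, ← hy]; exact ⟨hu, hv⟩
  · right; rw [← hy, ← hx]; exact ⟨hu, hv⟩

lemma mem_of_not_crosses {S : Set V} {x y : V} (h : ¬ Crosses S s(x, y)) (hx : x ∈ S) :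
    y ∈ S := by
  by_contra hy
  exact h ⟨x, y, rfl, hx, hy⟩

end PartAux

namespace PartAux
variable {U : Finset V} {P : Finset (Finset V)}

lemma blocks_crossing_le_two (hP : IsPartitionOf U P) (a : Sym2 V) :
    (P.filter fun B : Finset V => Crosses (↑B : Set V) a).card ≤ 2 := by
  induction a using Sym2.ind with
  | _ x y =>
  have hsub : (P.filter fun B : Finset V => Crosses (↑B : Set V) s(x, y)) ⊆
      (P.filter fun B : Finset V => x ∈ B) ∪ (P.filter fun B : Finset V => y ∈ B) := by
    intro B hB
    obtain ⟨hBP, hcr⟩ := Finset.mem_filter.mp hB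
    rcases crosses_cases hcr with ⟨h1, _⟩ | ⟨h1, _⟩
    · exact Finset.mem_union_left _ (Finset.mem_filter.mpr ⟨hBP, h1⟩)
    · exact Finset.mem_union_right _ (Finset.mem_filter.mpr ⟨hBP, h1⟩)
  have h1 : ∀ z : V, (P.filter fun B : Finset V => z ∈ B).card ≤ 1 := by
    intro z
    apply Finset.card_le_one.mpr
    intro B hB B' hB'
    obtain ⟨hBP, hzB⟩ := Finset.mem_filter.mp hB
    obtain ⟨hB'P, hzB'⟩ := Finset.mem_filter.mp hB'
    exact block_eq hP hBP hB'P hzB hzB'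
  calc (P.filter fun B : Finset V => Crosses (↑B : Set V) s(x, y)).card
      ≤ ((P.filter fun B : Finset V => x ∈ B) ∪ (P.filter fun B : Finset V => y ∈ B)).card :=
        Finset.card_le_card hsub
    _ ≤ _ := Finset.card_union_le _ _
    _ ≤ 2 := by have := h1 x; have := h1 y; omega

lemma merge_main (hP : IsPartitionOf U P) {a : Sym2 V} (hend : ∀ x ∈ a, x ∈ U)
    (hcr : ∃ B ∈ P, Crosses (↑B : Set V) a) :
    IsPartitionOf U (Pmerge P a) ∧ (Pmerge P a).card + 1 = P.card ∧
      (∀ Q, Q ⊆ P → ¬ Crosses (↑(Q.biUnion id) : Set V) a →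
        ((Pmerge P a).filter fun B => B ⊆ Q.biUnion id).biUnion id = Q.biUnion id) := by
  induction a using Sym2.ind with
  | _ x y =>
  obtain ⟨B₀, hB₀P, hB₀cr⟩ := hcr
  have hxU : x ∈ U := hend x (Sym2.mem_mk_left x y)
  have hyU : y ∈ U := hend y (Sym2.mem_mk_right x y)
  obtain ⟨Bx, hBxP, hxBx⟩ := exists_block hP hxU
  obtain ⟨By, hByP, hyBy⟩ := exists_block hP hyU
  have hBxBy : Bx ≠ By := by
    rcases crosses_cases hB₀cr with ⟨h1, h2⟩ | ⟨h1, h2⟩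
    · have hBB : B₀ = Bx := block_eq hP hB₀P hBxP (by exact_mod_cast h1) hxBx
      intro h
      apply h2
      rw [hBB, h]
      exact_mod_cast hyBy
    · have hBB : B₀ = By := block_eq hP hB₀P hByP (by exact_mod_cast h1) hyBy
      intro h
      apply h2
      rw [hBB, ← h]
      exact_mod_cast hxBx
  have hT : Tof P s(x, y) = {Bx, By} := by
    ext B
    simp only [Tof, Finset.mem_filter, Finset.mem_insert, Finset.mem_singleton]
    constructor
    · rintro ⟨hBP, z, hz, hzB⟩
      rcases Sym2.mem_iff.mp hz with h | h
      · left; exact block_eq hP hBP hBxP (h ▸ hzB) hxBx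
      · right; exact block_eq hP hBP hByP (h ▸ hzB) hyBy
    · rintro (rfl | rfl)
      · exact ⟨hBxP, x, Sym2.mem_mk_left x y, hxBx⟩
      · exact ⟨hByP, y, Sym2.mem_mk_right x y, hyBy⟩
  have hM : (Tof P s(x, y)).biUnion id = Bx ∪ By := by
    rw [hT]
    rw [Finset.biUnion_insert, Finset.singleton_biUnion]
    rfl
  set M : Finset V := Bx ∪ By with hMdef
  have hMne : M.Nonempty := Finset.Nonempty.inl (hP.1 Bx hBxP)
  have hMnotin : M ∉ P \ Tof P s(x, y) := by
    intro h
    obtain ⟨hMP, hMT⟩ := Finset.mem_sdiff.mp h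
    have : M = Bx := (block_eq hP hMP hBxP (Finset.mem_union_left _ hxBx) hxBx)
    apply hMT
    rw [hT]
    simp [this]
  have hdisj : ∀ B ∈ P \ Tof P s(x, y), Disjoint B M := by
    intro B hB
    obtain ⟨hBP, hBT⟩ := Finset.mem_sdiff.mp hB
    have h1 : B ≠ Bx := by rintro rfl; apply hBT; rw [hT]; simp
    have h2 : B ≠ By := by rintro rfl; apply hBT; rw [hT]; simp
    exact Finset.disjoint_union_right.mpr
      ⟨hP.2.1 B hBP Bx hBxP h1, hP.2.1 B hBP By hByP h2⟩
  have hpart : IsPartitionOf U (Pmerge P s(x, y)) := by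
    refine ⟨?_, ?_, ?_⟩
    · intro B hB
      rcases Finset.mem_insert.mp hB with h | h
      · rw [h, hM]; exact hMne
      · exact hP.1 B (Finset.mem_sdiff.mp h).1
    · intro B hB B' hB' hne
      rcases Finset.mem_insert.mp hB with h | h <;>
        rcases Finset.mem_insert.mp hB' with h' | h'
      · rw [h, h'] at hne; exact absurd rfl hne
      · rw [h, hM]; exact ((hdisj B' h').symm)
      · rw [h', hM]; exact (hdisj B h)
      · exact hP.2.1 B (Finset.mem_sdiff.mp h).1 B' (Finset.mem_sdiff.mp h').1 hne
    · rw [Pmerge, Finset.biUnion_insert, hM]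
      rw [← hP.2.2]
      ext z
      simp only [Finset.mem_union, Finset.mem_biUnion, Finset.mem_sdiff, id]
      constructor
      · rintro (h | ⟨B, ⟨hBP, _⟩, hzB⟩)
        · rcases Finset.mem_union.mp h with h | h
          · exact ⟨Bx, hBxP, h⟩
          · exact ⟨By, hByP, h⟩
        · exact ⟨B, hBP, hzB⟩
      · rintro ⟨B, hBP, hzB⟩
        by_cases hBT : B ∈ Tof P s(x, y)
        · left
          rw [hT] at hBT
          rcases Finset.mem_insert.mp hBT with h | h
          · exact Finset.mem_union_left _ (h ▸ hzB)
          · rw [Finset.mem_singleton] at h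
            exact Finset.mem_union_right _ (h ▸ hzB)
        · right; exact ⟨B, ⟨hBP, hBT⟩, hzB⟩
  have hcard : (Pmerge P s(x, y)).card + 1 = P.card := by
    rw [Pmerge, hM, Finset.card_insert_of_notMem hMnotin]
    have hTP : Tof P s(x, y) ⊆ P := Finset.filter_subset _ _
    rw [Finset.card_sdiff_of_subset hTP, hT]
    have : ({Bx, By} : Finset (Finset V)).card = 2 := Finset.card_pair hBxBy
    rw [this]
    have h2 : 2 ≤ P.card := by
      rw [← this]
      apply Finset.card_le_card
      intro B hB
      rcases Finset.mem_insert.mp hB with h | h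
      · exact h ▸ hBxP
      · rw [Finset.mem_singleton] at h; exact h ▸ hByP
    omega
  refine ⟨hpart, hcard, ?_⟩
  intro Q hQ hnc
  set S : Finset V := Q.biUnion id with hS
  apply Finset.Subset.antisymm
  · intro z hz
    obtain ⟨B, hB, hzB⟩ := Finset.mem_biUnion.mp hz
    exact (Finset.mem_filter.mp hB).2 hzB
  · intro z hz
    obtain ⟨C, hCQ, hzC⟩ := Finset.mem_biUnion.mp hz
    have hCP : C ∈ P := hQ hCQ
    have hCS : C ⊆ S := fun w hw => Finset.mem_biUnion.mpr ⟨C, hCQ, hw⟩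
    by_cases hCT : C ∈ Tof P s(x, y)
    · -- C is Bx or By; show the merged block is contained in S
      have hxS : x ∈ S := by
        rw [hT] at hCT
        rcases Finset.mem_insert.mp hCT with h | h
        · exact hCS (h ▸ hxBx)
        · rw [Finset.mem_singleton] at h
          subst h
          have hyS : y ∈ S := hCS hyBy
          by_contra hxS
          exact hnc ⟨y, x, Sym2.eq_swap, by exact_mod_cast hyS, by exact_mod_cast hxS⟩
      have hyS : y ∈ S := by
        have := mem_of_not_crosses hnc (by exact_mod_cast hxS)
        exact_mod_cast this
      have hBxS : Bx ⊆ S := by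
        obtain ⟨C', hC'Q, hxC'⟩ := Finset.mem_biUnion.mp hxS
        rw [block_eq hP hBxP (hQ hC'Q) hxBx hxC']
        exact fun w hw => Finset.mem_biUnion.mpr ⟨C', hC'Q, hw⟩
      have hByS : By ⊆ S := by
        obtain ⟨C', hC'Q, hyC'⟩ := Finset.mem_biUnion.mp hyS
        rw [block_eq hP hByP (hQ hC'Q) hyBy hyC']
        exact fun w hw => Finset.mem_biUnion.mpr ⟨C', hC'Q, hw⟩
      have hMS : M ⊆ S := Finset.union_subset hBxS hByS
      have hMmem : M ∈ (Pmerge P s(x, y)).filter fun B => B ⊆ S := by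
        apply Finset.mem_filter.mpr
        refine ⟨?_, hMS⟩
        rw [Pmerge, hM]
        exact Finset.mem_insert_self _ _
      apply Finset.mem_biUnion.mpr ⟨M, hMmem, ?_⟩
      rw [hT] at hCT
      rcases Finset.mem_insert.mp hCT with h | h
      · exact Finset.mem_union_left _ (h ▸ hzC)
      · rw [Finset.mem_singleton] at h
        exact Finset.mem_union_right _ (h ▸ hzC)
    · have hCmem : C ∈ (Pmerge P s(x, y)).filter fun B => B ⊆ S := by
        apply Finset.mem_filter.mpr
        exact ⟨Finset.mem_insert_of_mem (Finset.mem_sdiff.mpr ⟨hCP, hCT⟩), hCS⟩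
      exact Finset.mem_biUnion.mpr ⟨C, hCmem, hzC⟩

end PartAux

namespace PartAux

theorem viol_card_le (U : Finset V) (W : Finset (Sym2 V)) (s β : ℕ) (hs : 1 ≤ s)
    (hβ : 1 ≤ β) (hWend : ∀ a ∈ W, ∀ x ∈ a, x ∈ U)
    (hmin : ∀ S : Finset V, S ⊆ U → S.Nonempty → S ≠ U → s ≤ (xE W S).card) :
    ∀ q (P : Finset (Finset V)), P.card = q → IsPartitionOf U P →
      (viol W s β P).card ≤ 2 ^ (4 * β) * Nat.choose (max q (4 * β)) (2 * β) := by
  intro q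
  induction q using Nat.strong_induction_on with
  | _ q IH =>
  intro P hPcard hP
  by_cases hq : q ≤ 4 * β
  · have h1 : (viol W s β P).card ≤ 2 ^ q := by
      calc (viol W s β P).card ≤ P.powerset.card :=
            Finset.card_le_card (Finset.filter_subset _ _)
        _ = 2 ^ q := by rw [Finset.card_powerset, hPcard]
    have h2 : (2:ℕ) ^ q ≤ 2 ^ (4 * β) := Nat.pow_le_pow_right (by norm_num) hq
    have h3 : 1 ≤ Nat.choose (max q (4 * β)) (2 * β) :=
      Nat.choose_pos (le_trans (by omega) (le_max_right q (4 * β)))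
    calc (viol W s β P).card ≤ 2 ^ (4 * β) := le_trans h1 h2
      _ ≤ _ := Nat.le_mul_of_pos_right _ h3
  · push_neg at hq
    have hq2 : 2 ≤ P.card := by omega
    set N := (viol W s β P).card with hN
    set m := (interE W P).card with hm
    have hblock : ∀ B ∈ P, s ≤ (xE W B).card ∧
        xE W B = (interE W P).filter fun a => Crosses (↑B : Set V) a := by
      intro B hB
      constructor
      · exact hmin B (block_subset hP hB) (hP.1 B hB) (block_ne_univ hP hq2 hB)
      · ext a
        simp only [xE, interE, Finset.mem_filter]
        constructor
        · rintro ⟨haW, hcr⟩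
          exact ⟨⟨haW, B, hB, hcr⟩, hcr⟩
        · rintro ⟨⟨haW, _⟩, hcr⟩
          exact ⟨haW, hcr⟩
    have hqs : q * s ≤ 2 * m := by
      have h1 : q * s ≤ ∑ B ∈ P, (xE W B).card := by
        rw [← hPcard]
        calc P.card * s = ∑ _B ∈ P, s := by rw [Finset.sum_const, smul_eq_mul]
          _ ≤ _ := Finset.sum_le_sum fun B hB => (hblock B hB).1
      have h2 : ∑ B ∈ P, (xE W B).card =
          ∑ a ∈ interE W P, (P.filter fun B : Finset V => Crosses (↑B : Set V) a).card := by
        calc ∑ B ∈ P, (xE W B).card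
            = ∑ B ∈ P, ∑ a ∈ interE W P,
                (if Crosses (↑B : Set V) a then 1 else 0) := by
              apply Finset.sum_congr rfl
              intro B hB
              rw [(hblock B hB).2, Finset.card_filter]
          _ = ∑ a ∈ interE W P, ∑ B ∈ P,
                (if Crosses (↑B : Set V) a then 1 else 0) := Finset.sum_comm
          _ = _ := by
              apply Finset.sum_congr rfl
              intro a _
              rw [Finset.card_filter]
      have h4 : ∑ a ∈ interE W P,
          (P.filter fun B : Finset V => Crosses (↑B : Set V) a).card ≤ 2 * m := by
        calc ∑ a ∈ interE W P, (P.filter fun B : Finset V => Crosses (↑B : Set V) a).card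
            ≤ ∑ _a ∈ interE W P, 2 :=
              Finset.sum_le_sum fun a _ => blocks_crossing_le_two hP a
          _ = 2 * m := by rw [Finset.sum_const, smul_eq_mul, mul_comm]
      omega
    have hQmem : ∀ Q ∈ viol W s β P, Q ⊆ P ∧ Q.Nonempty ∧ Q ≠ P ∧
        (xE W (Q.biUnion id)).card ≤ β * s := by
      intro Q hQ
      have h := Finset.mem_filter.mp hQ
      exact ⟨Finset.mem_powerset.mp h.1, h.2.1, h.2.2.1, h.2.2.2⟩
    have hQgood : ∀ Q ∈ viol W s β P, m ≤
        ((interE W P).filter fun a => ¬ Crosses (↑(Q.biUnion id) : Set V) a).card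
          + β * s := by
      intro Q hQ
      obtain ⟨hQsub, hQne, hQneP, hQcut⟩ := hQmem Q hQ
      have hsplit := Finset.card_filter_add_card_filter_not
        (s := interE W P) (p := fun a => Crosses (↑(Q.biUnion id) : Set V) a)
      have hcross_le : ((interE W P).filter
          fun a => Crosses (↑(Q.biUnion id) : Set V) a).card ≤ β * s := by
        refine le_trans (Finset.card_le_card ?_) hQcut
        intro a ha
        obtain ⟨ha1, ha2⟩ := Finset.mem_filter.mp ha
        exact Finset.mem_filter.mpr ⟨(Finset.mem_filter.mp ha1).1, ha2⟩
      omega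
    have hsum1 : N * m ≤
        (∑ Q ∈ viol W s β P, ((interE W P).filter
          fun a => ¬ Crosses (↑(Q.biUnion id) : Set V) a).card) + N * (β * s) := by
      calc N * m = ∑ _Q ∈ viol W s β P, m := by rw [Finset.sum_const, smul_eq_mul]
        _ ≤ ∑ Q ∈ viol W s β P, (((interE W P).filter
            fun a => ¬ Crosses (↑(Q.biUnion id) : Set V) a).card + β * s) :=
            Finset.sum_le_sum hQgood
        _ = _ := by rw [Finset.sum_add_distrib, Finset.sum_const, smul_eq_mul]
    have hswap : ∑ Q ∈ viol W s β P, ((interE W P).filter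
          fun a => ¬ Crosses (↑(Q.biUnion id) : Set V) a).card
        = ∑ a ∈ interE W P, ((viol W s β P).filter
          fun Q => ¬ Crosses (↑(Q.biUnion id) : Set V) a).card := by
      simp_rw [Finset.card_filter]
      exact Finset.sum_comm
    set G' := 2 ^ (4 * β) * Nat.choose (max (q - 1) (4 * β)) (2 * β) with hG'
    have hinj : ∀ a ∈ interE W P, ((viol W s β P).filter
          fun Q => ¬ Crosses (↑(Q.biUnion id) : Set V) a).card ≤ G' := by
      intro a ha
      obtain ⟨haW, hacr⟩ := Finset.mem_filter.mp ha
      obtain ⟨hpart', hcard', hkey⟩ := merge_main hP (hWend a haW) hacr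
      have hcard'' : (Pmerge P a).card = q - 1 := by omega
      refine le_trans ?_ (IH (q - 1) (by omega) (Pmerge P a) hcard'' hpart')
      apply Finset.card_le_card_of_injOn
        (fun Q => (Pmerge P a).filter fun B => B ⊆ Q.biUnion id)
      · intro Q hQ
        obtain ⟨hQv, hQnc⟩ := Finset.mem_filter.mp hQ
        obtain ⟨hQsub, hQne, hQneP, hQcut⟩ := hQmem Q hQv
        have hkeyQ := hkey Q hQsub hQnc
        apply Finset.mem_filter.mpr
        refine ⟨Finset.mem_powerset.mpr (Finset.filter_subset _ _), ?_, ?_, ?_⟩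
        · have hSne := union_nonempty hP hQsub hQne
          rw [← hkeyQ] at hSne
          obtain ⟨z, hz⟩ := hSne
          obtain ⟨B, hB, _⟩ := Finset.mem_biUnion.mp hz
          exact ⟨B, hB⟩
        · intro hcontra
          apply union_ne_univ hP hQsub hQneP
          rw [← hkeyQ, show {B ∈ Pmerge P a | B ⊆ Q.biUnion id} = Pmerge P a from hcontra]
          exact hpart'.2.2
        · rw [hkeyQ]
          exact hQcut
      · intro Q1 h1 Q2 h2 heq
        obtain ⟨h1v, h1nc⟩ := Finset.mem_filter.mp h1
        obtain ⟨h1sub, _, _, _⟩ := hQmem Q1 h1v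
        obtain ⟨h2v, h2nc⟩ := Finset.mem_filter.mp h2
        obtain ⟨h2sub, _, _, _⟩ := hQmem Q2 h2v
        have hkey1 := hkey Q1 h1sub h1nc
        have hkey2 := hkey Q2 h2sub h2nc
        simp only at heq
        have hS : Q1.biUnion id = Q2.biUnion id := by
          rw [← hkey1, heq, hkey2]
        rw [eq_filter_subset hP h1sub, hS, ← eq_filter_subset hP h2sub]
    have hsum2 : N * m ≤ m * G' + N * (β * s) := by
      have h6 := hsum1
      rw [hswap] at h6
      have h5 : ∑ a ∈ interE W P, ((viol W s β P).filter
          fun Q => ¬ Crosses (↑(Q.biUnion id) : Set V) a).card ≤ m * G' := by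
        calc _ ≤ ∑ _a ∈ interE W P, G' := Finset.sum_le_sum hinj
          _ = m * G' := by rw [Finset.sum_const, smul_eq_mul]
      omega
    -- final arithmetic
    have hmax1 : max (q - 1) (4 * β) = q - 1 := max_eq_left (by omega)
    have hmax2 : max q (4 * β) = q := max_eq_left (by omega)
    rw [hmax2]
    rw [hmax1] at hG'
    set A := 2 ^ (4 * β) with hA
    set C1 := Nat.choose (q - 1) (2 * β) with hC1
    set C2 := Nat.choose q (2 * β) with hC2
    set D := q - 2 * β with hD
    have hid : q * C1 = C2 * D := by
      rw [hC1, hC2, hD]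
      have h1 := Nat.add_one_mul_choose_eq (q - 1) (2 * β)
      have h2 := Nat.choose_succ_right_eq q (2 * β)
      have h3 : q - 1 + 1 = q := by omega
      rw [h3] at h1
      omega
    have hm1 : 1 ≤ m := by
      have : q ≤ q * s := Nat.le_mul_of_pos_right q hs
      omega
    have hqD : q = D + 2 * β := by omega
    have hD1 : 1 ≤ D := by omega
    rw [hG'] at hsum2
    -- N * m ≤ m * (A * C1) + N * (β * s)
    have s1 : N * m * q ≤ (m * (A * C1) + N * (β * s)) * q :=
      Nat.mul_le_mul_right q hsum2
    have s2 : N * (β * s) * q ≤ N * β * (2 * m) := by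
      calc N * (β * s) * q = N * β * (q * s) := by ring
        _ ≤ N * β * (2 * m) := Nat.mul_le_mul_left _ hqs
    have s3 : m * (A * C1) * q = m * (A * (C2 * D)) := by
      calc m * (A * C1) * q = m * A * (q * C1) := by ring
        _ = m * A * (C2 * D) := by rw [hid]
        _ = m * (A * (C2 * D)) := by ring
    have s4 : N * q * m ≤ (A * C2 * D + 2 * N * β) * m := by
      calc N * q * m = N * m * q := by ring
        _ ≤ (m * (A * C1) + N * (β * s)) * q := s1
        _ = m * (A * C1) * q + N * (β * s) * q := by ring
        _ ≤ m * (A * (C2 * D)) + N * β * (2 * m) := by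
            rw [s3]
            exact Nat.add_le_add_left s2 _
        _ = (A * C2 * D + 2 * N * β) * m := by ring
    have s5 : N * q ≤ A * C2 * D + 2 * N * β :=
      Nat.le_of_mul_le_mul_right s4 hm1
    have s6 : N * D ≤ A * C2 * D := by
      have : N * D + 2 * N * β ≤ A * C2 * D + 2 * N * β := by
        calc N * D + 2 * N * β = N * q := by rw [hqD]; ring
          _ ≤ _ := s5
      omega
    calc N = N * D / D := by rw [Nat.mul_div_cancel _ hD1]
      _ ≤ A * C2 * D / D := Nat.div_le_div_right s6
      _ = A * C2 := by rw [Nat.mul_div_cancel _ hD1]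

theorem cutset_count (U : Finset V) (W : Finset (Sym2 V)) (s β : ℕ) (hs : 1 ≤ s)
    (hβ : 1 ≤ β) (hWend : ∀ a ∈ W, ∀ x ∈ a, x ∈ U)
    (hmin : ∀ S : Finset V, S ⊆ U → S.Nonempty → S ≠ U → s ≤ (xE W S).card) :
    (U.powerset.filter fun S => S.Nonempty ∧ S ≠ U ∧ (xE W S).card ≤ β * s).card
      ≤ 2 ^ (4 * β) * Nat.choose (max U.card (4 * β)) (2 * β) := by
  have hbi : ∀ S : Finset V, ((S.image fun x => ({x} : Finset V)).biUnion id) = S := by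
    intro S
    ext z
    simp [Finset.mem_biUnion]
  have hsing : Function.Injective (fun x : V => ({x} : Finset V)) := by
    intro x y h
    simpa using h
  have hP0 : IsPartitionOf U (U.image fun x => ({x} : Finset V)) := by
    refine ⟨?_, ?_, ?_⟩
    · intro B hB
      obtain ⟨x, _, rfl⟩ := Finset.mem_image.mp hB
      exact ⟨x, Finset.mem_singleton_self x⟩
    · intro B hB B' hB' hne
      obtain ⟨x, _, rfl⟩ := Finset.mem_image.mp hB
      obtain ⟨y, _, rfl⟩ := Finset.mem_image.mp hB'
      simp only [Finset.disjoint_singleton]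
      intro h
      exact hne (by rw [h])
    · exact hbi U
  have hcard : (U.image fun x => ({x} : Finset V)).card = U.card :=
    Finset.card_image_of_injective _ hsing
  refine le_trans (Finset.card_le_card_of_injOn
    (fun S => S.image fun x => ({x} : Finset V)) ?_ ?_)
    (viol_card_le U W s β hs hβ hWend hmin U.card _ hcard hP0)
  · intro S hS
    have h := Finset.mem_filter.mp hS
    have hSpow := Finset.mem_powerset.mp h.1
    obtain ⟨hSne, hSneU, hScut⟩ := h.2
    apply Finset.mem_filter.mpr
    refine ⟨Finset.mem_powerset.mpr (Finset.image_subset_image hSpow), ?_, ?_, ?_⟩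
    · obtain ⟨z, hz⟩ := hSne
      exact ⟨{z}, Finset.mem_image_of_mem _ hz⟩
    · intro h
      simp only at h
      apply hSneU
      rw [← hbi S, h, hbi U]
    · rw [hbi S]
      exact hScut
  · intro S1 h1 S2 h2 heq
    rw [← hbi S1, ← hbi S2]
    simp only at heq
    rw [heq]

end PartAux

end Count


section Heavy
variable {V : Type*} [Fintype V] [DecidableEq V]

attribute [local instance] Classical.propDecidable
open PartAux

lemma sym2_card_le (V : Type*) [Fintype V] [DecidableEq V] :
    Fintype.card (Sym2 V) ≤ Fintype.card V * Fintype.card V := by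
  rw [Sym2.card, Nat.choose_two_right]
  set c := Fintype.card V
  have hcc : c ≤ c * c := by
    rcases Nat.eq_zero_or_pos c with h | h
    · simp [h]
    · exact Nat.le_mul_of_pos_left c h
  have h : (c + 1) * (c + 1 - 1) ≤ 2 * (c * c) := by
    rw [Nat.add_sub_cancel]
    nlinarith
  omega

set_option maxHeartbeats 2000000 in
lemma heavy_edge_bound (E : Set (Sym2 V)) (hE : ∀ a ∈ E, ¬ a.IsDiag) {e : Sym2 V}
    (he : e ∈ E) (d : ℝ) (hd : 0 < d)
    (hlog : 4 ≤ Real.log (Fintype.card V))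
    (hheavy : 16 * (d + 2) * Real.log (Fintype.card V) * Real.log (Fintype.card V) <
      (strongConn E e : ℝ)) :
    Pr (fun _ : Sym2 V => 4 / Real.log (Fintype.card V))
      {σ | ¬ ((strongConn E e : ℝ) ≤
        2 * (strongConn ({e' | e' ∈ E ∧ σ e' = true} ∪ {e}) e : ℝ) *
          Real.log (Fintype.card V) +
        16 * (d + 2) * Real.log (Fintype.card V) * Real.log (Fintype.card V))} ≤
      (Fintype.card V : ℝ) ^ 2 * Real.exp (-(12 * (d + 2) * Real.log (Fintype.card V))) := by
  set n : ℕ := Fintype.card V with hn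
  set L : ℝ := Real.log n with hL
  have hL0 : 0 < L := lt_of_lt_of_le (by norm_num) hlog
  set p : ℝ := 4 / L with hp
  have hp0 : 0 ≤ p := by positivity
  have hp1 : p ≤ 1 := by
    rw [hp, div_le_one hL0]; linarith
  set s : ℕ := strongConn E e with hsdef
  have hs0 : (0:ℝ) < (s:ℝ) := by
    have : (0:ℝ) ≤ 16 * (d + 2) * L * L := by positivity
    linarith
  have hs1 : 1 ≤ s := by exact_mod_cast Nat.one_le_iff_ne_zero.mpr (by
    intro h; rw [h] at hs0; norm_num at hs0)
  obtain ⟨U, hUconn, hUend⟩ := exists_strong_witness hE he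
  set UF : Finset V := (Set.toFinite U).toFinset with hUF
  set WF : Finset (Sym2 V) := (Set.toFinite (induced E U)).toFinset with hWF
  have hUFcoe : (↑UF : Set V) = U := Set.Finite.coe_toFinset _
  have hWFmem : ∀ a, a ∈ WF ↔ a ∈ induced E U := fun a => Set.Finite.mem_toFinset _
  have hWend : ∀ a ∈ WF, ∀ x ∈ a, x ∈ UF := by
    intro a ha x hx
    have := ((hWFmem a).mp ha).2 x hx
    rw [← hUFcoe] at this
    exact_mod_cast this
  -- bridge between Finset cut value and Set cut value
  have hbridge : ∀ S : Finset V, (xE WF S).card = cutValue (induced E U) (↑S : Set V) := by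
    intro S
    rw [cutValue, ← Set.ncard_coe_finset]
    congr 1
    ext a
    constructor
    · intro ha
      have h : a ∈ WF.filter fun a => Crosses (↑S : Set V) a := Finset.mem_coe.mp ha
      obtain ⟨h1, h2⟩ := Finset.mem_filter.mp h
      exact ⟨(hWFmem a).mp h1, h2⟩
    · rintro ⟨h1, h2⟩
      exact Finset.mem_coe.mpr (Finset.mem_filter.mpr ⟨(hWFmem a).mpr h1, h2⟩)
  have hmin : ∀ S : Finset V, S ⊆ UF → S.Nonempty → S ≠ UF → s ≤ (xE WF S).card := by
    intro S hSU hSne hSneU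
    rw [hbridge S]
    apply hUconn (↑S : Set V)
    · rw [← hUFcoe]
      exact Finset.coe_subset.mpr hSU
    · exact Finset.coe_nonempty.mpr hSne
    · intro h
      apply hSneU
      apply Finset.coe_injective
      rw [h, hUFcoe]
  set t : ℕ := ⌊(s : ℝ) / (2 * L)⌋₊ with ht
  set 𝒮 : Finset (Finset V) := UF.powerset.filter (fun S => S.Nonempty ∧ S ≠ UF) with h𝒮
  -- event inclusion
  have hincl : {σ : Sym2 V → Bool | ¬ ((strongConn E e : ℝ) ≤
        2 * (strongConn ({e' | e' ∈ E ∧ σ e' = true} ∪ {e}) e : ℝ) * L +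
        16 * (d + 2) * L * L)} ⊆
      ⋃ S ∈ 𝒮, {σ : Sym2 V → Bool |
        (((xE WF S).filter fun a => σ a = true).card : ℝ) < (t : ℝ)} := by
    intro σ hσ
    simp only [Set.mem_setOf_eq] at hσ
    by_contra hnot
    apply hσ
    have hall : ∀ S ∈ 𝒮, (t:ℝ) ≤ (((xE WF S).filter fun a => σ a = true).card : ℝ) := by
      intro S hS
      by_contra hlt
      push_neg at hlt
      exact hnot (Set.mem_biUnion hS hlt)
    set F : Set (Sym2 V) := {e' | e' ∈ E ∧ σ e' = true} ∪ {e} with hF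
    have hFE : F ⊆ E := by
      rintro a (h | h)
      · exact h.1
      · rw [Set.mem_singleton_iff.mp h]; exact he
    have hFd : ∀ a ∈ F, ¬ a.IsDiag := fun a ha => hE a (hFE ha)
    have heF : e ∈ F := Set.mem_union_right _ rfl
    have hconn : IsKConnected U (induced F U) t := by
      intro S' hS'U hS'ne hS'neU
      set FS : Finset V := (Set.toFinite S').toFinset with hFSdef
      have hFScoe : (↑FS : Set V) = S' := Set.Finite.coe_toFinset _
      have hFS𝒮 : FS ∈ 𝒮 := by
        apply Finset.mem_filter.mpr
        refine ⟨Finset.mem_powerset.mpr ?_, ?_, ?_⟩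
        · intro x hx
          have hx' : x ∈ S' := by rw [← hFScoe]; exact_mod_cast hx
          have : x ∈ U := hS'U hx'
          rw [← hUFcoe] at this
          exact_mod_cast this
        · obtain ⟨z, hz⟩ := hS'ne
          refine ⟨z, ?_⟩
          have : z ∈ (↑FS : Set V) := by rw [hFScoe]; exact hz
          exact_mod_cast this
        · intro h
          apply hS'neU
          rw [← hFScoe, h, hUFcoe]
      have htle : (t:ℝ) ≤ (((xE WF FS).filter fun a => σ a = true).card : ℝ) := hall FS hFS𝒮
      have htle' : t ≤ ((xE WF FS).filter fun a => σ a = true).card := by exact_mod_cast htle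
      refine le_trans htle' ?_
      rw [cutValue, ← Set.ncard_coe_finset]
      apply Set.ncard_le_ncard _ (Set.toFinite _)
      intro a ha
      obtain ⟨ha1, ha2⟩ := Finset.mem_filter.mp (Finset.mem_coe.mp ha)
      have ha1' : a ∈ WF.filter fun b => Crosses (↑FS : Set V) b := ha1
      obtain ⟨haW, hacr⟩ := Finset.mem_filter.mp ha1'
      have haInd := (hWFmem a).mp haW
      refine ⟨⟨Set.mem_union_left _ ⟨haInd.1, ha2⟩, haInd.2⟩, ?_⟩
      rwa [hFScoe] at hacr
    have hs' : t ≤ strongConn F e := le_strongConn hFd heF hUend hconn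
    have hs'' : (t:ℝ) ≤ (strongConn F e : ℝ) := by exact_mod_cast hs'
    have htlb : (s:ℝ)/(2*L) - 1 < (t:ℝ) := by
      have := Nat.lt_floor_add_one ((s:ℝ)/(2*L))
      have h2 : (t:ℝ) = (⌊(s : ℝ) / (2 * L)⌋₊ : ℝ) := by rw [ht]
      linarith
    have h2L : 2 * L ≤ 16*(d+2)*L*L := by
      have h4 : 4*L ≤ L*L := by nlinarith [mul_nonneg (sub_nonneg.mpr hlog) hL0.le]
      nlinarith [mul_nonneg hL0.le hL0.le]
    have hstep : (s:ℝ) ≤ 2*(t:ℝ)*L + 16*(d+2)*L*L := by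
      have h3 : 2*((s:ℝ)/(2*L))*L = (s:ℝ) := by
        field_simp
      nlinarith [htlb, hL0]
    calc (s:ℝ) ≤ 2*(t:ℝ)*L + 16*(d+2)*L*L := hstep
      _ ≤ 2*(strongConn F e : ℝ)*L + 16*(d+2)*L*L := by nlinarith [hL0.le]
  -- chernoff per cut
  have hchern : ∀ S ∈ 𝒮, Pr (fun _ : Sym2 V => p)
      {σ : Sym2 V → Bool | (((xE WF S).filter fun a => σ a = true).card : ℝ) < (t : ℝ)} ≤
      Real.exp (-(3/8) * (p * (xE WF S).card)) := by
    intro S hS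
    apply chernoff p hp0 hp1
    have h := Finset.mem_filter.mp hS
    have hSpow := Finset.mem_powerset.mp h.1
    obtain ⟨hSne, hSneU⟩ := h.2
    have hcs : s ≤ (xE WF S).card := hmin S hSpow hSne hSneU
    have hcs' : (s:ℝ) ≤ ((xE WF S).card : ℝ) := by exact_mod_cast hcs
    calc (t:ℝ) ≤ (s : ℝ) / (2 * L) := Nat.floor_le (by positivity)
      _ ≤ ((xE WF S).card : ℝ) / (2 * L) := by
          exact div_le_div_of_nonneg_right hcs' (by positivity)
      _ = p * ((xE WF S).card : ℝ) / 8 := by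
          rw [hp]
          field_simp
          ring
  -- summation
  have hsum : ∑ S ∈ 𝒮, Real.exp (-(3/8) * (p * (xE WF S).card)) ≤
      (n : ℝ) ^ 2 * Real.exp (-(12 * (d + 2) * L)) := by
    set M : ℕ := Fintype.card (Sym2 V) with hMdef
    have hn1 : 1 ≤ n := by
      by_contra h
      push_neg at h
      have h0 : n = 0 := by omega
      rw [hL, h0] at hlog
      norm_num at hlog
    have hc_mem : ∀ S ∈ 𝒮, (xE WF S).card ∈ Finset.Icc s M := by
      intro S hS
      have h := Finset.mem_filter.mp hS
      have hSpow := Finset.mem_powerset.mp h.1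
      obtain ⟨hSne, hSneU⟩ := h.2
      exact Finset.mem_Icc.mpr ⟨hmin S hSpow hSne hSneU, Finset.card_le_univ _⟩
    have hfib := Finset.sum_fiberwise_of_maps_to hc_mem
      (fun S => Real.exp (-(3/8) * (p * ((xE WF S).card : ℝ))))
    have hkbound : ∀ k ∈ Finset.Icc s M,
        (∑ S ∈ 𝒮.filter (fun S => (xE WF S).card = k),
          Real.exp (-(3/8) * (p * ((xE WF S).card : ℝ)))) ≤
        Real.exp (-(12 * (d + 2) * L)) := by
      intro k hk
      obtain ⟨hks, hkM⟩ := Finset.mem_Icc.mp hk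
      have hconst : ∀ S ∈ 𝒮.filter (fun S => (xE WF S).card = k),
          Real.exp (-(3/8) * (p * ((xE WF S).card : ℝ))) =
          Real.exp (-(3/8) * (p * (k : ℝ))) := by
        intro S hS
        rw [(Finset.mem_filter.mp hS).2]
      rw [Finset.sum_congr rfl hconst, Finset.sum_const, nsmul_eq_mul]
      -- counting bound
      set β : ℕ := k / s + 1 with hβdef
      have hs0' : 0 < s := hs1
      have hβ1 : 1 ≤ β := Nat.le_add_left 1 _
      have hk1 : 1 ≤ k := le_trans hs1 hks
      have hkβs : k ≤ β * s := by
        have h1 := Nat.div_add_mod k s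
        have h2 := Nat.mod_lt k hs0'
        have h3 : β * s = s * (k/s) + s := by rw [hβdef]; ring
        omega
      have h1div : 1 ≤ k / s := (Nat.one_le_div_iff hs0').mpr hks
      have hβ2k : β ≤ 2 * k := by
        have := Nat.div_le_self k s
        omega
      have hsub : (𝒮.filter fun S => (xE WF S).card = k) ⊆ UF.powerset.filter
          (fun S => S.Nonempty ∧ S ≠ UF ∧ (xE WF S).card ≤ β * s) := by
        intro S hS
        obtain ⟨hS𝒮, hSk⟩ := Finset.mem_filter.mp hS
        have h := Finset.mem_filter.mp hS𝒮
        exact Finset.mem_filter.mpr ⟨h.1, h.2.1, h.2.2, by rw [hSk]; exact hkβs⟩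
      have hcnt2 := cutset_count UF WF s β hs1 hβ1 hWend hmin
      have hucard : UF.card ≤ n := Finset.card_le_univ UF
      have hmax : max UF.card (4*β) ≤ 16 * n * k := by
        apply max_le
        · calc UF.card ≤ n := hucard
            _ ≤ n * (16*k) := Nat.le_mul_of_pos_right n (by omega)
            _ = 16 * n * k := by ring
        · calc 4*β ≤ 4*(2*k) := by omega
            _ = 8*k := by ring
            _ ≤ (8*k) * (2*n) := Nat.le_mul_of_pos_right _ (by omega)
            _ = 16 * n * k := by ring
      have hcount : (𝒮.filter fun S => (xE WF S).card = k).card ≤ (64*n*k)^(2*β) := by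
        refine le_trans (Finset.card_le_card hsub) (le_trans hcnt2 ?_)
        have h1 : Nat.choose (max UF.card (4*β)) (2*β) ≤ (max UF.card (4*β))^(2*β) :=
          Nat.choose_le_pow _ _
        calc 2^(4*β) * Nat.choose (max UF.card (4*β)) (2*β)
            ≤ 2^(4*β) * (max UF.card (4*β))^(2*β) := Nat.mul_le_mul_left _ h1
          _ = 4^(2*β) * (max UF.card (4*β))^(2*β) := by
              rw [show (4:ℕ) = 2^2 by norm_num, ← pow_mul]
              congr 1
              ring
          _ = (4 * max UF.card (4*β))^(2*β) := (mul_pow _ _ _).symm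
          _ ≤ (4 * (16*n*k))^(2*β) := Nat.pow_le_pow_left (Nat.mul_le_mul_left _ hmax) _
          _ = (64*n*k)^(2*β) := by ring
      -- real estimates
      have hNk1 : 1 ≤ 64*n*k := by
        have h1 : 1*1 ≤ n*k := Nat.mul_le_mul hn1 hk1
        have h2 : n*k ≤ 64*(n*k) := Nat.le_mul_of_pos_left _ (by norm_num)
        calc 1 = 1*1 := by ring
          _ ≤ n*k := h1
          _ ≤ 64*(n*k) := h2
          _ = 64*n*k := by ring
      have hcR : ((𝒮.filter fun S => (xE WF S).card = k).card : ℝ) ≤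
          ((64*n*k : ℕ) : ℝ)^(2*β) := by exact_mod_cast hcount
      have hx1 : (1:ℝ) ≤ ((64*n*k : ℕ) : ℝ) := by exact_mod_cast hNk1
      have hxpos : (0:ℝ) < ((64*n*k : ℕ) : ℝ) := lt_of_lt_of_le zero_lt_one hx1
      have hkn2 : (k:ℝ) ≤ (n:ℝ)*(n:ℝ) := by
        have h1 : k ≤ n * n := le_trans hkM (sym2_card_le V)
        exact_mod_cast h1
      have hnR1 : (1:ℝ) ≤ (n:ℝ) := by exact_mod_cast hn1
      have hxle : ((64*n*k:ℕ):ℝ) ≤ 64*(n:ℝ)^3 := by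
        push_cast
        nlinarith [hkn2, hnR1]
      have hlog64 : Real.log (64*(n:ℝ)^3) = Real.log 64 + 3*L := by
        have hn0 : (n:ℝ) ≠ 0 := by linarith
        rw [Real.log_mul (by norm_num) (pow_ne_zero _ hn0), Real.log_pow, hL]
        push_cast
        ring
      have h64 : Real.log 64 ≤ 4.2 := by
        rw [show (64:ℝ) = 2^6 by norm_num, Real.log_pow]
        have := Real.log_two_lt_d9
        push_cast
        linarith
      have hlogx : Real.log ((64*n*k:ℕ):ℝ) ≤ (81/20)*L := by
        calc Real.log ((64*n*k:ℕ):ℝ) ≤ Real.log (64*(n:ℝ)^3) :=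
              Real.log_le_log hxpos hxle
          _ = Real.log 64 + 3*L := hlog64
          _ ≤ (81/20)*L := by linarith
      have hβR : (2*(β:ℝ)) ≤ 4*(k:ℝ)/(s:ℝ) := by
        have hβn : β ≤ 2*(k/s) := by omega
        have hc1 : ((k/s : ℕ):ℝ) ≤ (k:ℝ)/(s:ℝ) := Nat.cast_div_le
        have hβR0 : (β:ℝ) ≤ 2*((k/s:ℕ):ℝ) := by exact_mod_cast hβn
        calc (2*(β:ℝ)) ≤ 2*(2*((k/s:ℕ):ℝ)) := by linarith
          _ ≤ 4*((k:ℝ)/(s:ℝ)) := by linarith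
          _ = 4*(k:ℝ)/(s:ℝ) := by ring
      have hskR : (s:ℝ) ≤ (k:ℝ) := by exact_mod_cast hks
      have hlogx0 : 0 ≤ Real.log ((64*n*k:ℕ):ℝ) := Real.log_nonneg hx1
      have hdL : (0:ℝ) < 16*(d+2)*L*L := by positivity
      have hmain : (2*(β:ℝ)) * Real.log ((64*n*k:ℕ):ℝ) ≤ (3/4)*((k:ℝ)/L) := by
        have c3 : (2*(β:ℝ)) * Real.log ((64*n*k:ℕ):ℝ) ≤
            (4*(k:ℝ)/(s:ℝ)) * ((81/20)*L) :=
          mul_le_mul hβR hlogx hlogx0 (by positivity)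
        have c5 : (4*(k:ℝ)/(s:ℝ)) * ((81/20)*L) = (81/5)*((k:ℝ)*L/(s:ℝ)) := by ring
        have c6 : (k:ℝ)*L/(s:ℝ) ≤ (k:ℝ)*L/(16*(d+2)*L*L) := by
          apply div_le_div_of_nonneg_left (by positivity) hdL hheavy.le
        have c7 : (81/5)*((k:ℝ)*L/(16*(d+2)*L*L)) = (81/(80*(d+2)))*((k:ℝ)/L) := by
          field_simp
          ring
        have hkL0 : 0 ≤ (k:ℝ)/L := by positivity
        have c8 : (81/(80*(d+2))) ≤ (3/4 : ℝ) := by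
          rw [div_le_div_iff₀ (by positivity) (by norm_num)]
          nlinarith
        have c9 : (81/(80*(d+2)))*((k:ℝ)/L) ≤ (3/4)*((k:ℝ)/L) :=
          mul_le_mul_of_nonneg_right c8 hkL0
        calc (2*(β:ℝ)) * Real.log ((64*n*k:ℕ):ℝ)
            ≤ (4*(k:ℝ)/(s:ℝ)) * ((81/20)*L) := c3
          _ = (81/5)*((k:ℝ)*L/(s:ℝ)) := c5
          _ ≤ (81/5)*((k:ℝ)*L/(16*(d+2)*L*L)) := by linarith
          _ = (81/(80*(d+2)))*((k:ℝ)/L) := c7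
          _ ≤ (3/4)*((k:ℝ)/L) := c9
      have hpow : ((64*n*k:ℕ):ℝ)^(2*β) =
          Real.exp ((2*(β:ℝ)) * Real.log ((64*n*k:ℕ):ℝ)) := by
        rw [show (2*(β:ℝ)) = ((2*β : ℕ):ℝ) by push_cast; ring]
        rw [← Real.log_pow, Real.exp_log (by positivity)]
      have hpk : (3/8)*(p*(k:ℝ)) = (3/2)*((k:ℝ)/L) := by
        rw [hp]
        field_simp
        ring
      have h12 : (s:ℝ)/L ≤ (k:ℝ)/L := by gcongr
      have h11 : 12*(d+2)*L ≤ (3/4)*((s:ℝ)/L) := by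
        have hsL : 16*(d+2)*L ≤ (s:ℝ)/L := by
          rw [le_div_iff₀ hL0]
          nlinarith [hheavy]
        nlinarith [hsL]
      have hexp_le : (2*(β:ℝ)) * Real.log ((64*n*k:ℕ):ℝ) + (-(3/8)*(p*(k:ℝ))) ≤
          -(12*(d+2)*L) := by
        have hneg : -(3/8)*(p*(k:ℝ)) = -((3/2)*((k:ℝ)/L)) := by
          rw [hp]
          field_simp
          ring
        rw [hneg]
        linarith [hmain, h11, h12]
      calc ((𝒮.filter fun S => (xE WF S).card = k).card : ℝ) *
            Real.exp (-(3/8) * (p * (k : ℝ)))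
          ≤ Real.exp ((2*(β:ℝ)) * Real.log ((64*n*k:ℕ):ℝ)) *
            Real.exp (-(3/8) * (p * (k : ℝ))) := by
            apply mul_le_mul_of_nonneg_right _ (Real.exp_pos _).le
            rw [← hpow]
            exact hcR
        _ = Real.exp ((2*(β:ℝ)) * Real.log ((64*n*k:ℕ):ℝ) + (-(3/8)*(p*(k:ℝ)))) := by
            rw [← Real.exp_add]
        _ ≤ Real.exp (-(12*(d+2)*L)) := Real.exp_le_exp.mpr hexp_le
    calc ∑ S ∈ 𝒮, Real.exp (-(3/8) * (p * ((xE WF S).card : ℝ)))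
        = ∑ k ∈ Finset.Icc s M, ∑ S ∈ 𝒮.filter (fun S => (xE WF S).card = k),
            Real.exp (-(3/8) * (p * ((xE WF S).card : ℝ))) := hfib.symm
      _ ≤ ∑ _k ∈ Finset.Icc s M, Real.exp (-(12*(d+2)*L)) := Finset.sum_le_sum hkbound
      _ = ((Finset.Icc s M).card : ℝ) * Real.exp (-(12*(d+2)*L)) := by
          rw [Finset.sum_const, nsmul_eq_mul]
      _ ≤ (n:ℝ)^2 * Real.exp (-(12*(d+2)*L)) := by
          apply mul_le_mul_of_nonneg_right _ (Real.exp_pos _).le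
          have hMn : (Finset.Icc s M).card ≤ n*n := by
            rw [Nat.card_Icc]
            have h := sym2_card_le V
            rw [← hn] at h
            omega
          calc ((Finset.Icc s M).card : ℝ) ≤ ((n*n : ℕ):ℝ) := by exact_mod_cast hMn
            _ = (n:ℝ)^2 := by push_cast; ring
  calc Pr (fun _ : Sym2 V => p) _ ≤ Pr (fun _ : Sym2 V => p)
        (⋃ S ∈ 𝒮, {σ : Sym2 V → Bool |
          (((xE WF S).filter fun a => σ a = true).card : ℝ) < (t : ℝ)}) :=
        Pr_mono (fun _ => hp0) (fun _ => hp1) hincl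
    _ ≤ ∑ S ∈ 𝒮, Pr (fun _ : Sym2 V => p)
        {σ : Sym2 V → Bool | (((xE WF S).filter fun a => σ a = true).card : ℝ) < (t : ℝ)} :=
        Pr_union_bound (fun _ => hp0) (fun _ => hp1) 𝒮 _
    _ ≤ ∑ S ∈ 𝒮, Real.exp (-(3/8) * (p * (xE WF S).card)) := Finset.sum_le_sum hchern
    _ ≤ _ := hsum

end Heavy


/-- Let `G' = (V, E')` be the random subgraph of `G = (V, E)` obtained by
including each edge independently with probability `p = 4/log n`, and for each `e ∈ E` let
`s'_e` denote the strong connectivity of `e` in the graph `(V, E' ∪ {e})`. Then, with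
probability at least `1 - n^{-d}`, every edge `e ∈ E` satisfies
`s'_e ≤ s_e ≤ 2 s'_e log n + ρ log n`, where `ρ = 16(d+2) ln n`. -/
theorem strength_estimation_first_pass {V : Type} [Fintype V] [DecidableEq V]
    (E : Set (Sym2 V)) (hE : ∀ e ∈ E, ¬ e.IsDiag) (d : ℝ) (hd : 0 < d) :
    let n : ℕ := Fintype.card V
    let ρ : ℝ := 16 * (d + 2) * Real.log n
    1 - (n : ℝ) ^ (-d) ≤
      Pr (fun _ : Sym2 V => 4 / Real.log n)
        {σ | ∀ e ∈ E,
          strongConn ({e' | e' ∈ E ∧ σ e' = true} ∪ {e}) e ≤ strongConn E e ∧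
          (strongConn E e : ℝ) ≤
            2 * (strongConn ({e' | e' ∈ E ∧ σ e' = true} ∪ {e}) e : ℝ) * Real.log n +
              ρ * Real.log n} := by
  intro n ρ
  have hρ : ρ = 16 * (d + 2) * Real.log n := rfl
  have hnn : n = Fintype.card V := rfl
  classical
  have hfirst : ∀ (σ : Sym2 V → Bool), ∀ e ∈ E,
      strongConn ({e' | e' ∈ E ∧ σ e' = true} ∪ {e}) e ≤ strongConn E e := by
    intro σ e he
    refine strongConn_subgraph_le hE ?_ he
    rintro a (h | h)
    · exact h.1
    · rw [Set.mem_singleton_iff.mp h]; exact he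
  have hL0 : 0 ≤ Real.log n := by
    rcases Nat.eq_zero_or_pos n with h | h
    · rw [h]; norm_num
    · apply Real.log_natCast_nonneg
  by_cases hheavy : ∃ e ∈ E, 16 * (d + 2) * Real.log n * Real.log n < (strongConn E e : ℝ)
  case neg =>
    push_neg at hheavy
    have hA : {σ : Sym2 V → Bool | ∀ e ∈ E,
        strongConn ({e' | e' ∈ E ∧ σ e' = true} ∪ {e}) e ≤ strongConn E e ∧
        (strongConn E e : ℝ) ≤
          2 * (strongConn ({e' | e' ∈ E ∧ σ e' = true} ∪ {e}) e : ℝ) * Real.log n +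
            ρ * Real.log n} = Set.univ := by
      ext σ
      simp only [Set.mem_univ, iff_true, Set.mem_setOf_eq]
      intro e he
      refine ⟨hfirst σ e he, ?_⟩
      have h1 := hheavy e he
      have h2 : (0:ℝ) ≤
          2 * (strongConn ({e' | e' ∈ E ∧ σ e' = true} ∪ {e}) e : ℝ) * Real.log n := by
        positivity
      rw [hρ]
      nlinarith
    rw [hA, Pr_univ]
    have h0 : (0:ℝ) ≤ (n:ℝ) ^ (-d) := Real.rpow_nonneg (Nat.cast_nonneg n) _
    linarith
  case pos =>
    obtain ⟨e₀, he₀, hs₀⟩ := hheavy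
    set L : ℝ := Real.log n with hLdef
    have hs₀1 : 1 ≤ strongConn E e₀ := by
      by_contra h
      push_neg at h
      have h0 : strongConn E e₀ = 0 := by omega
      rw [h0] at hs₀
      push_cast at hs₀
      nlinarith [mul_nonneg hL0 hL0, hd]
    have hcard := strongConn_le_card hE he₀
    rw [← hnn] at hcard
    have hn2 : 2 ≤ n := by omega
    have hsR : (strongConn E e₀ : ℝ) ≤ (n:ℝ) - 1 := by
      have h1 : strongConn E e₀ ≤ n - 1 := hcard
      have h2 : ((n - 1 : ℕ) : ℝ) = (n:ℝ) - 1 := by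
        have : (1:ℕ) ≤ n := by omega
        push_cast [this]
        ring
      calc (strongConn E e₀ : ℝ) ≤ ((n - 1 : ℕ) : ℝ) := by exact_mod_cast h1
        _ = (n:ℝ) - 1 := h2
    have hs₀R : 32 * L * L < (n:ℝ) - 1 := by
      have h2 : 32*L*L ≤ 16*(d+2)*L*L := by nlinarith [hd, mul_nonneg hL0 hL0]
      linarith
    have hn55 : 55 ≤ n := by
      by_contra hn
      push_neg at hn
      have hlog2 := Real.log_two_gt_d9
      by_cases h4 : 4 ≤ n
      · have hl4 : Real.log 4 ≤ L := by
          rw [hLdef]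
          apply Real.log_le_log (by norm_num)
          exact_mod_cast h4
        have hl4' : Real.log 4 = 2 * Real.log 2 := by
          rw [show (4:ℝ) = 2^2 by norm_num, Real.log_pow]
          push_cast
          ring
        have hnR : (n:ℝ) - 1 ≤ 53 := by
          have : (n:ℝ) ≤ 54 := by exact_mod_cast (by omega : n ≤ 54)
          linarith
        nlinarith
      · push_neg at h4
        have hnR : (n:ℝ) - 1 ≤ 2 := by
          have : (n:ℝ) ≤ 3 := by exact_mod_cast (by omega : n ≤ 3)
          linarith
        have hl2 : Real.log 2 ≤ L := by
          rw [hLdef]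
          apply Real.log_le_log (by norm_num)
          exact_mod_cast hn2
        nlinarith
    have hnpos : (0:ℝ) < (n:ℝ) := by
      have : (0:ℕ) < n := by omega
      exact_mod_cast this
    have hlog4 : 4 ≤ L := by
      rw [hLdef, Real.le_log_iff_exp_le hnpos]
      have h1 : Real.exp (4:ℝ) = (Real.exp 1)^(4:ℕ) := by
        rw [← Real.exp_nat_mul]
        norm_num
      have h2 := Real.exp_one_lt_d9
      have h3 : (Real.exp 1)^(4:ℕ) ≤ (2.7182818286:ℝ)^(4:ℕ) :=
        pow_le_pow_left₀ (Real.exp_pos 1).le h2.le 4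
      have h4 : (2.7182818286:ℝ)^(4:ℕ) ≤ 55 := by norm_num
      have h5 : (55:ℝ) ≤ (n:ℝ) := by exact_mod_cast hn55
      linarith
    set pf : Sym2 V → ℝ := fun _ => 4 / L with hpf
    have hLpos : (0:ℝ) < L := by linarith
    have hp0 : ∀ a : Sym2 V, 0 ≤ pf a := fun a => by
      rw [hpf]; positivity
    have hp1 : ∀ a : Sym2 V, pf a ≤ 1 := fun a => by
      rw [hpf]
      simp only
      rw [div_le_one hLpos]
      linarith
    set A : Set (Sym2 V → Bool) := {σ | ∀ e ∈ E,
      strongConn ({e' | e' ∈ E ∧ σ e' = true} ∪ {e}) e ≤ strongConn E e ∧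
      (strongConn E e : ℝ) ≤
        2 * (strongConn ({e' | e' ∈ E ∧ σ e' = true} ∪ {e}) e : ℝ) * L + ρ * L} with hA
    set B : Sym2 V → Set (Sym2 V → Bool) := fun e => {σ | ¬ ((strongConn E e : ℝ) ≤
      2 * (strongConn ({e' | e' ∈ E ∧ σ e' = true} ∪ {e}) e : ℝ) * L +
      16 * (d + 2) * L * L)} with hB
    set EH : Finset (Sym2 V) := ((Set.toFinite E).toFinset.filter
      (fun e => 16 * (d + 2) * L * L < (strongConn E e : ℝ))) with hEH
    have hcompl : Aᶜ ⊆ ⋃ e ∈ EH, B e := by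
      intro σ hσ
      have hσ' : σ ∉ A := hσ
      rw [hA] at hσ'
      simp only [Set.mem_setOf_eq] at hσ'
      push_neg at hσ'
      obtain ⟨e, he, hfail⟩ := hσ'
      have hQ : ¬ ((strongConn E e : ℝ) ≤
          2 * (strongConn ({e' | e' ∈ E ∧ σ e' = true} ∪ {e}) e : ℝ) * L + ρ * L) :=
        not_le.mpr (hfail (hfirst σ e he))
      have hheavy_e : 16 * (d + 2) * L * L < (strongConn E e : ℝ) := by
        by_contra hle
        push_neg at hle
        apply hQ
        have h2 : (0:ℝ) ≤
            2 * (strongConn ({e' | e' ∈ E ∧ σ e' = true} ∪ {e}) e : ℝ) * L := by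
          positivity
        rw [hρ]
        linarith
      have hmemEH : e ∈ EH := by
        rw [hEH]
        exact Finset.mem_filter.mpr ⟨(Set.Finite.mem_toFinset _).mpr he, hheavy_e⟩
      have hmemB : σ ∈ B e := by
        rw [hB]
        simp only [Set.mem_setOf_eq]
        intro hq
        apply hQ
        rw [hρ]
        exact hq
      exact Set.mem_biUnion hmemEH hmemB
    have hAc : Pr pf A + Pr pf Aᶜ = 1 := Pr_add_compl pf A
    have hBe : ∀ e ∈ EH, Pr pf (B e) ≤ (n:ℝ)^2 * Real.exp (-(12*(d+2)*L)) := by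
      intro e heEH
      rw [hEH] at heEH
      obtain ⟨heE', hhe⟩ := Finset.mem_filter.mp heEH
      have heE : e ∈ E := (Set.Finite.mem_toFinset _).mp heE'
      exact heavy_edge_bound E hE heE d hd hlog4 hhe
    have hPrc : Pr pf Aᶜ ≤ ∑ e ∈ EH, Pr pf (B e) :=
      le_trans (Pr_mono hp0 hp1 hcompl) (Pr_union_bound hp0 hp1 EH B)
    have hsum2 : ∑ e ∈ EH, Pr pf (B e) ≤
        (EH.card : ℝ) * ((n:ℝ)^2 * Real.exp (-(12*(d+2)*L))) := by
      calc ∑ e ∈ EH, Pr pf (B e)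
          ≤ ∑ _e ∈ EH, (n:ℝ)^2 * Real.exp (-(12*(d+2)*L)) := Finset.sum_le_sum hBe
        _ = _ := by rw [Finset.sum_const, nsmul_eq_mul]
    have hEHcard : (EH.card : ℝ) ≤ (n:ℝ)^2 := by
      have h1 : EH.card ≤ Fintype.card (Sym2 V) := Finset.card_le_univ _
      have h2 := sym2_card_le V
      rw [← hnn] at h2
      have h3 : EH.card ≤ n*n := le_trans h1 h2
      calc (EH.card : ℝ) ≤ ((n*n : ℕ) : ℝ) := by exact_mod_cast h3
        _ = (n:ℝ)^2 := by push_cast; ring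
    have hfin : (n:ℝ)^2 * ((n:ℝ)^2 * Real.exp (-(12*(d+2)*L))) ≤ (n:ℝ)^(-d) := by
      have h1 : (n:ℝ)^2 * (n:ℝ)^2 = Real.exp (4*L) := by
        have h2 : (n:ℝ)^2*(n:ℝ)^2 = (n:ℝ)^(4:ℕ) := by ring
        rw [h2, ← Real.exp_log (pow_pos hnpos 4), Real.log_pow, hLdef]
        push_cast
        ring_nf
      have h3 : (n:ℝ)^(-d) = Real.exp ((-d) * L) := by
        rw [Real.rpow_def_of_pos hnpos, hLdef]
        ring_nf
      calc (n:ℝ)^2 * ((n:ℝ)^2 * Real.exp (-(12*(d+2)*L)))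
          = Real.exp (4*L) * Real.exp (-(12*(d+2)*L)) := by rw [← h1]; ring
        _ = Real.exp (4*L + -(12*(d+2)*L)) := by rw [← Real.exp_add]
        _ ≤ Real.exp ((-d)*L) := by
            apply Real.exp_le_exp.mpr
            nlinarith
        _ = (n:ℝ)^(-d) := h3.symm
    have hfinal : Pr pf Aᶜ ≤ (n:ℝ)^(-d) := by
      calc Pr pf Aᶜ ≤ (EH.card : ℝ) * ((n:ℝ)^2 * Real.exp (-(12*(d+2)*L))) :=
            le_trans hPrc hsum2
        _ ≤ (n:ℝ)^2 * ((n:ℝ)^2 * Real.exp (-(12*(d+2)*L))) := by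
            apply mul_le_mul_of_nonneg_right hEHcard (by positivity)
        _ ≤ (n:ℝ)^(-d) := hfin
    linarith


end GraphSparsification
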